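/- Let f, m, h ∈ ℂ with |m|² ≥ |f|·|h|. Then for all (X₁, X₂, φ) ∈ ℂ³, |f + (1/2)·h·φ²|² + |m·φ|² + |m·X₂ + h·X₁·φ|² ≥ |f|², and equality holds at every point with φ = 0 and X₂ = 0 (X₁ arbitrary). (In the O'Raifeartaigh model with |m|² ≥ |fh|, the global minimum of the scalar potential is the SUSY breaking value |f|², attained on the flat direction X₂ = φ = 0.) -/

import Mathlib

/-- In the O'Raifeartaigh model with `|m|² ≥ |f||h|`, the scalar potential is bounded below
by the SUSY breaking value `|f|²`, attained on the flat direction `X₂ = φ = 0`. -/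
theorem oraifeartaigh_global_min (f m h : ℂ)
    (hm : ‖m‖ ^ 2 ≥ ‖f‖ * ‖h‖) :
    (∀ X₁ X₂ φ : ℂ,
      ‖f + (1 / 2) * h * φ ^ 2‖ ^ 2 + ‖m * φ‖ ^ 2
        + ‖m * X₂ + h * X₁ * φ‖ ^ 2 ≥ ‖f‖ ^ 2) ∧
    (∀ X₁ : ℂ,
      ‖f + (1 / 2) * h * (0 : ℂ) ^ 2‖ ^ 2 + ‖m * (0 : ℂ)‖ ^ 2
        + ‖m * (0 : ℂ) + h * X₁ * (0 : ℂ)‖ ^ 2 = ‖f‖ ^ 2) := by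
  constructor
  · intro X₁ X₂ φ
    have htri : ‖f‖ ≤ ‖f + (1 / 2) * h * φ ^ 2‖
        + ‖(1 / 2) * h * φ ^ 2‖ := by
      calc ‖f‖ = ‖f + (1 / 2) * h * φ ^ 2 - (1 / 2) * h * φ ^ 2‖ := by
            ring_nf
      _ ≤ _ := norm_sub_le _ _
    have h1 : ‖(1 / 2) * h * φ ^ 2‖
        = (1 / 2) * (‖h‖ * ‖φ‖ ^ 2) := by
      simp [map_mul, map_pow]; ring
    have h2 : ‖m * φ‖ ^ 2 = ‖m‖ ^ 2 * ‖φ‖ ^ 2 := by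
      simp [map_mul]; ring
    have hmphi : ‖m‖ ^ 2 * ‖φ‖ ^ 2
        ≥ ‖f‖ * ‖h‖ * ‖φ‖ ^ 2 := by
      have := sq_nonneg (‖φ‖)
      nlinarith
    have h3 : (0:ℝ) ≤ ‖m * X₂ + h * X₁ * φ‖ ^ 2 := sq_nonneg _
    have h4 : (0:ℝ) ≤ ‖f + (1 / 2) * h * φ ^ 2‖ := norm_nonneg _
    have h5 : (0:ℝ) ≤ ‖f‖ := norm_nonneg _
    nlinarith [sq_nonneg (‖f + (1 / 2) * h * φ ^ 2‖ - ‖f‖)]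
  · intro X₁
    simp
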